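/- Fix c > 0 and let K be the 2×2 matrix with rows (0, c⁻¹) and (c, 0). Let U = {(T, x) ∈ ℝ² : c²T² ≠ x²} and let f : U → ℝ² be continuously differentiable with Df(Z)(K·Z) = K·f(Z) for every Z ∈ U. Then there exist differentiable functions φ, ψ : U → ℝ such that f(Z) = φ(Z)·Z + ψ(Z)·K·Z for every Z ∈ U, and Dφ(Z)(K·Z) = 0 and Dψ(Z)(K·Z) = 0 for every Z ∈ U. -/

import Mathlib

set_option maxHeartbeats 1000000

/-- Fix `c > 0` and `K = [[0, c⁻¹],[c, 0]]` (generator of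
`so(1,1)`). On `U = {(T,x) : c²T² ≠ x²}`, every continuously differentiable `f`
with `Df(Z)(K·Z) = K·f(Z)` decomposes as `f(Z) = φ(Z)•Z + ψ(Z)•K·Z` with
differentiable coefficients `φ, ψ` that are radial: `Dφ(Z)(K·Z) = Dψ(Z)(K·Z) = 0`
on `U`. -/
theorem stmt_13 (c : ℝ) (hc : 0 < c)
    (K : Matrix (Fin 2) (Fin 2) ℝ) (hK : K = Matrix.of ![![0, c⁻¹], ![c, 0]])
    (U : Set (Fin 2 → ℝ))
    (hU : U = {Z | c ^ 2 * (Z 0) ^ 2 ≠ (Z 1) ^ 2})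
    (f : (Fin 2 → ℝ) → (Fin 2 → ℝ))
    (hf : ContDiffOn ℝ 1 f U)
    (hequiv : ∀ Z ∈ U, fderiv ℝ f Z (K.mulVec Z) = K.mulVec (f Z)) :
    ∃ φ ψ : (Fin 2 → ℝ) → ℝ,
      (∀ Z ∈ U, DifferentiableAt ℝ φ Z ∧ DifferentiableAt ℝ ψ Z) ∧
      (∀ Z ∈ U, f Z = φ Z • Z + ψ Z • K.mulVec Z) ∧
      (∀ Z ∈ U, fderiv ℝ φ Z (K.mulVec Z) = 0 ∧ fderiv ℝ ψ Z (K.mulVec Z) = 0) := by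
  have hc0 : c ≠ 0 := ne_of_gt hc
  set D : (Fin 2 → ℝ) → ℝ := fun Z => c ^ 2 * (Z 0 * Z 0) - Z 1 * Z 1 with hDdef
  have hDne : ∀ Z ∈ U, D Z ≠ 0 := by
    intro Z hZ
    rw [hU] at hZ
    exact sub_ne_zero.mpr (by simpa [pow_two] using hZ)
  have hopen : IsOpen U := by
    rw [hU]
    exact isOpen_ne_fun (by fun_prop) (by fun_prop)
  have hv : ∀ Z : Fin 2 → ℝ, K.mulVec Z = ![c⁻¹ * Z 1, c * Z 0] := by
    intro Z
    funext i
    fin_cases i <;>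
      simp [hK, Matrix.mulVec, dotProduct, Fin.sum_univ_two, Matrix.vecHead, Matrix.vecTail]
  set φ : (Fin 2 → ℝ) → ℝ :=
    fun Z => (c ^ 2 * (f Z 0 * Z 0) - f Z 1 * Z 1) * (D Z)⁻¹ with hφdef
  set ψ : (Fin 2 → ℝ) → ℝ :=
    fun Z => (c * (Z 0 * f Z 1 - Z 1 * f Z 0)) * (D Z)⁻¹ with hψdef
  set p0 : ((Fin 2) → ℝ) →L[ℝ] ℝ :=
    ContinuousLinearMap.proj (R := ℝ) (φ := fun _ : Fin 2 => ℝ) 0 with hp0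
  set p1 : ((Fin 2) → ℝ) →L[ℝ] ℝ :=
    ContinuousLinearMap.proj (R := ℝ) (φ := fun _ : Fin 2 => ℝ) 1 with hp1
  -- key derivative computations
  have key : ∀ Z ∈ U, ∃ Lφ Lψ : ((Fin 2) → ℝ) →L[ℝ] ℝ,
      HasFDerivAt φ Lφ Z ∧ HasFDerivAt ψ Lψ Z ∧
      Lφ (K.mulVec Z) = 0 ∧ Lψ (K.mulVec Z) = 0 := by
    intro Z hZ
    have hfd : DifferentiableAt ℝ f Z :=
      (hf.differentiableOn one_ne_zero).differentiableAt (hopen.mem_nhds hZ)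
    set F : ((Fin 2) → ℝ) →L[ℝ] ((Fin 2) → ℝ) := fderiv ℝ f Z with hF
    have hfF : HasFDerivAt f F Z := hfd.hasFDerivAt
    have hFv : F (K.mulVec Z) = K.mulVec (f Z) := hequiv Z hZ
    have hf0 : HasFDerivAt (fun Z => f Z 0) (p0.comp F) Z :=
      p0.hasFDerivAt.comp Z hfF
    have hf1 : HasFDerivAt (fun Z => f Z 1) (p1.comp F) Z :=
      p1.hasFDerivAt.comp Z hfF
    have hz0 : HasFDerivAt (fun Z : Fin 2 → ℝ => Z 0) p0 Z := p0.hasFDerivAt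
    have hz1 : HasFDerivAt (fun Z : Fin 2 → ℝ => Z 1) p1 Z := p1.hasFDerivAt
    -- derivative of D
    have hD : HasFDerivAt D
        ((c ^ 2) • (Z 0 • p0 + Z 0 • p0) - (Z 1 • p1 + Z 1 • p1)) Z :=
      ((hz0.mul hz0).const_mul (c ^ 2)).sub (hz1.mul hz1)
    have hDinv := (hasDerivAt_inv (hDne Z hZ)).comp_hasFDerivAt Z hD
    -- numerators
    have hN : HasFDerivAt (fun Z => c ^ 2 * (f Z 0 * Z 0) - f Z 1 * Z 1)
        ((c ^ 2) • (f Z 0 • p0 + Z 0 • (p0.comp F)) - (f Z 1 • p1 + Z 1 • (p1.comp F))) Z :=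
      ((hf0.mul hz0).const_mul (c ^ 2)).sub (hf1.mul hz1)
    have hM : HasFDerivAt (fun Z => c * (Z 0 * f Z 1 - Z 1 * f Z 0))
        (c • ((Z 0 • (p1.comp F) + f Z 1 • p0) - (Z 1 • (p0.comp F) + f Z 0 • p1))) Z :=
      ((hz0.mul hf1).sub (hz1.mul hf0)).const_mul c
    have hφd := hN.mul hDinv
    have hψd := hM.mul hDinv
    obtain ⟨v, hvv⟩ : ∃ v, K.mulVec Z = v := ⟨_, rfl⟩
    have hw0 : v 0 = c⁻¹ * Z 1 := by rw [← hvv, hv]; simp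
    have hw1 : v 1 = c * Z 0 := by rw [← hvv, hv]; simp
    have hFv0 : F v 0 = c⁻¹ * f Z 1 := by
      rw [← hvv, hFv, hv]; simp
    have hFv1 : F v 1 = c * f Z 0 := by
      rw [← hvv, hFv, hv]; simp
    rw [hvv]
    refine ⟨_, _, hφd, hψd, ?_, ?_⟩ <;>
    · simp only [ContinuousLinearMap.add_apply, ContinuousLinearMap.sub_apply,
        ContinuousLinearMap.smul_apply, ContinuousLinearMap.comp_apply, hp0, hp1,
        ContinuousLinearMap.proj_apply, ContinuousLinearMap.neg_apply, smul_eq_mul,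
        hw0, hw1, hFv0, hFv1]
      field_simp
      ring
  refine ⟨φ, ψ, ?_, ?_, ?_⟩
  · intro Z hZ
    obtain ⟨Lφ, Lψ, h1, h2, _, _⟩ := key Z hZ
    exact ⟨h1.differentiableAt, h2.differentiableAt⟩
  · intro Z hZ
    have hD := hDne Z hZ
    funext i
    fin_cases i <;>
    · simp only [Pi.add_apply, Pi.smul_apply, smul_eq_mul, hφdef, hψdef, hv,
        Matrix.cons_val_zero, Matrix.cons_val_one, Matrix.head_cons, Fin.isValue, Fin.zero_eta, Fin.mk_one]
      field_simp
      ring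
  · intro Z hZ
    obtain ⟨Lφ, Lψ, h1, h2, h3, h4⟩ := key Z hZ
    rw [h1.fderiv, h2.fderiv]
    exact ⟨h3, h4⟩
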